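/- Let C be a connected small category and B a subcategory of C which is a forest (disjoint union of trees). Then B can be extended to a maximal tree of C, i.e., there exists a wide subcategory T of C containing B whose localization is indiscrete. -/

import Mathlib

open CategoryTheory

universe v u

/-- A subcategory of a category `C`, given by a set of objects and sets of morphisms closed
under identities and composition. -/
structure Subcat (C : Type u) [Category.{v} C] : Type (max u v) where
  objs : Set C
  homs : ∀ x y : C, Set (x ⟶ y)
  src_mem : ∀ {x y : C} {f : x ⟶ y}, f ∈ homs x y → x ∈ objs
  tgt_mem : ∀ {x y : C} {f : x ⟶ y}, f ∈ homs x y → y ∈ objs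
  id_mem : ∀ x ∈ objs, 𝟙 x ∈ homs x x
  comp_mem : ∀ {x y z : C} {f : x ⟶ y} {g : y ⟶ z},
    f ∈ homs x y → g ∈ homs y z → f ≫ g ∈ homs x z

namespace Subcat
variable {C : Type u} [Category.{v} C] (S : Subcat C)

/-- The underlying category of a subcategory. -/
def carrier : Type u := {x : C // x ∈ S.objs}

instance : Category.{v} S.carrier where
  Hom a b := {f : a.1 ⟶ b.1 // f ∈ S.homs a.1 b.1}
  id a := ⟨𝟙 a.1, S.id_mem a.1 a.2⟩
  comp f g := ⟨f.1 ≫ g.1, S.comp_mem f.2 g.2⟩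
  id_comp f := Subtype.ext (Category.id_comp f.1)
  comp_id f := Subtype.ext (Category.comp_id f.1)
  assoc f g h := Subtype.ext (Category.assoc f.1 g.1 h.1)

/-- The inclusion functor of a subcategory. -/
def incl : S.carrier ⥤ C where
  obj x := x.1
  map f := f.1
  map_id _ := rfl
  map_comp _ _ := rfl

end Subcat

/-- A category is indiscrete if there is exactly one morphism between any two objects. -/
def IsIndiscrete (D : Type*) [Category D] : Prop := ∀ x y : D, ∃! _f : x ⟶ y, True

/-- A small category is a tree if its localization (at all of its morphisms) is indiscrete. -/
def IsTree (T : Type*) [Category T] : Prop :=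
  IsIndiscrete ((⊤ : MorphismProperty T).Localization)

/-- A category is a forest if each of its connected components is a tree. -/
def IsForest (D : Type u) [Category.{v} D] : Prop :=
  ∀ j : ConnectedComponents D, IsTree (CategoryTheory.ConnectedComponents.Component j)

section L
variable {D : Type*} [Category D]


lemma loc_top_isIso {X Y : (⊤ : MorphismProperty D).Localization} (f : X ⟶ Y) : IsIso f := by
  have := Localization.Construction.morphismProperty_eq_top
    (MorphismProperty.isomorphisms (⊤ : MorphismProperty D).Localization)
    (hP₁ := fun X Y f => by
      rw [MorphismProperty.isomorphisms.iff]
      exact (Localization.Construction.wIso f trivial).isIso_hom)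
    (hP₂ := fun X Y w hw => by
      rw [MorphismProperty.isomorphisms.iff]
      exact (Localization.Construction.wIso w hw).isIso_inv)
  have : (MorphismProperty.isomorphisms (⊤ : MorphismProperty D).Localization) f := by rw [this]; trivial
  exact this

instance locTopIsIso {D : Type*} [Category D] {X Y : (⊤ : MorphismProperty D).Localization}
    (f : X ⟶ Y) : IsIso f := loc_top_isIso f

lemma isIndiscrete_of_cocone (r : D)
    (π : ∀ x : D, (⊤ : MorphismProperty D).Q.obj x ⟶ (⊤ : MorphismProperty D).Q.obj r)
    (hπ : ∀ {a b : D} (g : a ⟶ b), (⊤ : MorphismProperty D).Q.map g ≫ π b = π a) :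
    IsIndiscrete ((⊤ : MorphismProperty D).Localization) := by
  let π' : ∀ X : (⊤ : MorphismProperty D).Localization, X ⟶ (⊤ : MorphismProperty D).Q.obj r := fun X =>
    eqToHom ((Localization.Construction.objEquiv (⊤ : MorphismProperty D)).right_inv X).symm ≫ π (X.as.obj)
  let P : MorphismProperty (⊤ : MorphismProperty D).Localization := fun X Y f => f ≫ π' Y = π' X
  have hπ'Q : ∀ x : D, π' ((⊤ : MorphismProperty D).Q.obj x) = π x := fun x => by
    show eqToHom _ ≫ _ = _
    erw [eqToHom_refl, Category.id_comp]
    exact rfl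
  haveI : P.IsStableUnderComposition := ⟨fun f g hf hg => by
    simp only [P, Category.assoc] at *; rw [hg, hf]⟩
  have hP : P = ⊤ := by
    apply Localization.Construction.morphismProperty_eq_top' P
    · intro a b f
      show (⊤ : MorphismProperty D).Q.map f ≫ π' ((⊤ : MorphismProperty D).Q.obj b) = π' ((⊤ : MorphismProperty D).Q.obj a)
      rw [hπ'Q, hπ'Q]; exact hπ f
    · intro X Y e he
      show e.inv ≫ π' X = π' Y
      rw [← he, e.inv_hom_id_assoc]
  have hall : ∀ {X Y : (⊤ : MorphismProperty D).Localization} (f : X ⟶ Y), f ≫ π' Y = π' X := by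
    intro X Y f
    have : P f := by rw [hP]; trivial
    exact this
  intro X Y
  haveI : IsIso (π' Y) := loc_top_isIso _
  refine ⟨π' X ≫ inv (π' Y), trivial, ?_⟩
  intro f _
  rw [← hall f, Category.assoc, IsIso.hom_inv_id, Category.comp_id]

end L

section Main

open Localization

namespace Stmt11
open Classical

variable {C : Type u} [Category.{v} C] (B : Subcat C)

/-- Vertices: connected components of `B` plus objects outside `B`. -/
abbrev Vtx := ConnectedComponents B.carrier ⊕ {x : C // x ∉ B.objs}

open Classical in
noncomputable def ν (x : C) : Vtx B :=
  if h : x ∈ B.objs then .inl (Quotient.mk'' ⟨x, h⟩) else .inr ⟨x, h⟩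

noncomputable def ρ : Vtx B → C
  | .inl j => j.out.1
  | .inr x => x.1

lemma ν_mem {x : C} (h : x ∈ B.objs) : ν B x = .inl (Quotient.mk'' ⟨x, h⟩) := dif_pos h

lemma ν_not_mem {x : C} (h : x ∉ B.objs) : ν B x = .inr ⟨x, h⟩ := dif_neg h

lemma ν_ρ (v : Vtx B) : ν B (ρ B v) = v := by
  cases v with
  | inl j =>
    have h1 : ν B j.out.1 = Sum.inl (Quotient.mk'' j.out) := ν_mem B j.out.2
    exact h1.trans (congrArg Sum.inl (Quotient.out_eq' j))
  | inr x => exact ν_not_mem B x.2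

def EV (u v : Vtx B) : Prop := ∃ x y : C, ν B x = u ∧ ν B y = v ∧ Zag x y

def reach (r : C) : ℕ → Vtx B → Prop
  | 0, v => v = ν B r
  | n+1, v => reach r n v ∨ ∃ u, reach r n u ∧ EV B u v

variable [IsConnected C]

lemma reach_exists (r : C) (v : Vtx B) : ∃ n, reach B r n v := by
  suffices h : ∀ x : C, ∃ n, reach B r n (ν B x) by
    obtain ⟨n, hn⟩ := h (ρ B v)
    exact ⟨n, by rwa [ν_ρ] at hn⟩
  intro x
  have hz : Zigzag r x := isPreconnected_zigzag r x
  induction hz with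
  | refl => exact ⟨0, rfl⟩
  | tail _ hzag ih =>
      obtain ⟨n, hn⟩ := ih
      exact ⟨n+1, Or.inr ⟨_, hn, _, _, rfl, rfl, hzag⟩⟩

noncomputable def dv (r : C) (v : Vtx B) : ℕ := Nat.find (reach_exists B r v)

lemma dv_zero (r : C) (v : Vtx B) (h : dv B r v = 0) : v = ν B r := by
  have hs := Nat.find_spec (reach_exists B r v)
  rw [show Nat.find (reach_exists B r v) = 0 from h] at hs
  exact hs

lemma exists_parent (r : C) (v : Vtx B) (h : dv B r v ≠ 0) :
    ∃ p : Σ (x : C) (y : C), x ⟶ y,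
      (ν B p.1 = v ∧ dv B r (ν B p.2.1) < dv B r v) ∨
      (ν B p.2.1 = v ∧ dv B r (ν B p.1) < dv B r v) := by
  obtain ⟨n, hn⟩ : ∃ n, dv B r v = n + 1 :=
    ⟨dv B r v - 1, (Nat.succ_pred_eq_of_ne_zero h).symm⟩
  have hr : reach B r (n+1) v := by
    have := Nat.find_spec (reach_exists B r v)
    rwa [show Nat.find (reach_exists B r v) = n + 1 from hn] at this
  have hnr : ¬ reach B r n v := Nat.find_min (reach_exists B r v) (show n < dv B r v by omega)
  rcases hr with hr | ⟨u, hu, x, y, hx, hy, hzag⟩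
  · exact absurd hr hnr
  · have hdu : dv B r u ≤ n := Nat.find_min' _ hu
    rcases hzag with ⟨⟨f⟩⟩ | ⟨⟨g⟩⟩
    · exact ⟨⟨x, y, f⟩, Or.inr ⟨hy, by rw [hx, hn]; exact Nat.lt_succ_of_le hdu⟩⟩
    · exact ⟨⟨y, x, g⟩, Or.inl ⟨hy, by rw [hx, hn]; exact Nat.lt_succ_of_le hdu⟩⟩

noncomputable def emor (r : C) (v : Vtx B) : Σ (x : C) (y : C), x ⟶ y :=
  if h : dv B r v ≠ 0 then (exists_parent B r v h).choose else ⟨r, r, 𝟙 r⟩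

lemma emor_spec (r : C) (v : Vtx B) (h : dv B r v ≠ 0) :
    (ν B (emor B r v).1 = v ∧ dv B r (ν B (emor B r v).2.1) < dv B r v) ∨
    (ν B (emor B r v).2.1 = v ∧ dv B r (ν B (emor B r v).1) < dv B r v) := by
  rw [emor, dif_pos h]
  exact (exists_parent B r v h).choose_spec

/-- The extra edges to be added to `B`. -/
def Ehoms (r : C) : ∀ x y : C, Set (x ⟶ y) := fun x y =>
  {f | ∃ v : Vtx B, dv B r v ≠ 0 ∧ emor B r v = ⟨x, y, f⟩}

end Stmt11

/-- Subcategory generated by `B` together with extra morphisms `E`. -/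
inductive Gen {C : Type u} [Category.{v} C] (B : Subcat C) (E : ∀ x y : C, Set (x ⟶ y)) :
    ∀ x y : C, (x ⟶ y) → Prop
  | base {x y : C} {f : x ⟶ y} : f ∈ B.homs x y → Gen B E x y f
  | extra {x y : C} {f : x ⟶ y} : f ∈ E x y → Gen B E x y f
  | id (x : C) : Gen B E x x (𝟙 x)
  | comp {x y z : C} {f : x ⟶ y} {g : y ⟶ z} :
      Gen B E x y f → Gen B E y z g → Gen B E x z (f ≫ g)

namespace Stmt11
open Classical

variable {C : Type u} [Category.{v} C] (B : Subcat C)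

def Tsub (E : ∀ x y : C, Set (x ⟶ y)) : Subcat C where
  objs := Set.univ
  homs x y := {f | Gen B E x y f}
  src_mem _ := trivial
  tgt_mem _ := trivial
  id_mem x _ := Gen.id x
  comp_mem := Gen.comp

variable [IsConnected C] (r : C)

/-- The big wide subcategory. -/
noncomputable def TT : Subcat C := Tsub B (Ehoms B r)

noncomputable def inclBT : B.carrier ⥤ (TT B r).carrier where
  obj b := ⟨b.1, trivial⟩
  map f := ⟨f.1, Gen.base f.2⟩
  map_id _ := rfl
  map_comp _ _ := rfl

end Stmt11
end Main

section Main2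
open CategoryTheory Localization
namespace Stmt11
open Classical
set_option linter.unusedSectionVars false

variable {C : Type u} [Category.{v} C] (B : Subcat C) [IsConnected C] (r : C)
lemma loc_subsingleton (hB : IsForest B.carrier) (j : ConnectedComponents B.carrier)
    {X Y : (⊤ : MorphismProperty (ConnectedComponents.Component j)).Localization} (f g : X ⟶ Y) : f = g :=
  ((hB j X Y).unique trivial trivial)

noncomputable def can (hB : IsForest B.carrier) (j : ConnectedComponents B.carrier)
    (X Y : (⊤ : MorphismProperty (ConnectedComponents.Component j)).Localization) : (X ⟶ Y) :=
  (hB j X Y).exists.choose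

/-- inclusion of a component of `B` into the big subcategory -/
noncomputable def ΛF (j : ConnectedComponents B.carrier) :
    ConnectedComponents.Component j ⥤ (TT B r).carrier := ConnectedComponents.ι j ⋙ inclBT B r

/-- the induced functor on localizations -/
noncomputable def Λ (j : ConnectedComponents B.carrier) :
    (⊤ : MorphismProperty (ConnectedComponents.Component j)).Localization ⥤
      (⊤ : MorphismProperty (TT B r).carrier).Localization :=
  Localization.Construction.lift (ΛF B r j ⋙ (⊤ : MorphismProperty (TT B r).carrier).Q)
    (fun _ _ _ _ => loc_top_isIso _)

noncomputable def uu (hB : IsForest B.carrier) (j : ConnectedComponents B.carrier) (a b : ConnectedComponents.Component j) :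
    (⊤ : MorphismProperty (TT B r).carrier).Q.obj ((ΛF B r j).obj a) ⟶
      (⊤ : MorphismProperty (TT B r).carrier).Q.obj ((ΛF B r j).obj b) :=
  (Λ B r j).map (can B hB j ((⊤ : MorphismProperty (ConnectedComponents.Component j)).Q.obj a)
    ((⊤ : MorphismProperty (ConnectedComponents.Component j)).Q.obj b))

lemma uu_trans (hB : IsForest B.carrier) (j : ConnectedComponents B.carrier) (a b c : ConnectedComponents.Component j) :
    uu B r hB j a b ≫ uu B r hB j b c = uu B r hB j a c := by
  unfold uu
  erw [← Functor.map_comp]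
  exact congrArg (Λ B r j).map (loc_subsingleton B hB j _ _)

lemma uu_id (hB : IsForest B.carrier) (j : ConnectedComponents B.carrier) (a : ConnectedComponents.Component j) :
    uu B r hB j a a = 𝟙 _ := by
  unfold uu
  rw [show can B hB j _ _ = 𝟙 ((⊤ : MorphismProperty (ConnectedComponents.Component j)).Q.obj a) from
    loc_subsingleton B hB j _ _]
  rw [CategoryTheory.Functor.map_id]
  rfl

lemma uu_map (hB : IsForest B.carrier) (j : ConnectedComponents B.carrier) {a b : ConnectedComponents.Component j} (g : a ⟶ b) :
    (⊤ : MorphismProperty (TT B r).carrier).Q.map ((ΛF B r j).map g) = uu B r hB j a b := by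
  have h := Functor.congr_hom
    (Localization.Construction.fac (W := (⊤ : MorphismProperty (ConnectedComponents.Component j)))
      (ΛF B r j ⋙ (⊤ : MorphismProperty (TT B r).carrier).Q)
      (fun _ _ _ _ => loc_top_isIso _)) g
  unfold uu
  rw [show can B hB j _ _ = (⊤ : MorphismProperty (ConnectedComponents.Component j)).Q.map g from
    loc_subsingleton B hB j _ _]
  simp only [Functor.comp_map] at h
  rw [show (Λ B r j).map ((⊤ : MorphismProperty (ConnectedComponents.Component j)).Q.map g) = _ from h]
  simp [eqToHom_refl]
  erw [eqToHom_refl, eqToHom_refl, Category.id_comp, Category.comp_id]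

noncomputable def Gv (v : Vtx B) : (⊤ : MorphismProperty (TT B r).carrier).Localization :=
  (⊤ : MorphismProperty (TT B r).carrier).Q.obj ⟨ρ B v, trivial⟩

noncomputable def cc (j : ConnectedComponents B.carrier) : ConnectedComponents.Component j :=
  ⟨j.out, Quotient.out_eq' j⟩

noncomputable def link (hB : IsForest B.carrier) (x : C) :
    ((⊤ : MorphismProperty (TT B r).carrier).Q.obj ⟨x, trivial⟩ ⟶ Gv B r (ν B x)) :=
  if h : x ∈ B.objs then
    uu B r hB (Quotient.mk'' ⟨x, h⟩) ⟨⟨x, h⟩, rfl⟩ (cc B (Quotient.mk'' ⟨x, h⟩)) ≫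
      eqToHom (congrArg (Gv B r) (ν_mem B h).symm)
  else
    eqToHom (congrArg (Gv B r) (ν_not_mem B h).symm)

lemma link_u (hB : IsForest B.carrier) (x : B.carrier) (j : ConnectedComponents B.carrier)
    (hj : Quotient.mk'' x = j) :
    link B r hB x.1 = uu B r hB j ⟨x, hj⟩ (cc B j) ≫
      eqToHom (congrArg (Gv B r) (((ν_mem B x.2).trans (congrArg Sum.inl hj)).symm)) := by
  subst hj
  rw [link, dif_pos x.2]
  rfl

/-- The spine: a path from the representative of each vertex to the root. -/
noncomputable def Pi (hB : IsForest B.carrier) (v : Vtx B) :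
    (Gv B r v ⟶ (⊤ : MorphismProperty (TT B r).carrier).Q.obj ⟨r, trivial⟩) :=
  if h0 : dv B r v = 0 then
    eqToHom (congrArg (Gv B r) (dv_zero B r v h0)) ≫ inv (link B r hB r)
  else if h1 : ν B (emor B r v).1 = v then
    eqToHom (congrArg (Gv B r) h1.symm) ≫ inv (link B r hB (emor B r v).1) ≫
      (⊤ : MorphismProperty (TT B r).carrier).Q.map
        ⟨(emor B r v).2.2, Gen.extra ⟨v, h0, rfl⟩⟩ ≫
      link B r hB (emor B r v).2.1 ≫ Pi hB (ν B (emor B r v).2.1)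
  else
    eqToHom (congrArg (Gv B r)
      (((emor_spec B r v h0).resolve_left (fun hh => h1 hh.1)).1.symm)) ≫
      inv (link B r hB (emor B r v).2.1) ≫
      inv ((⊤ : MorphismProperty (TT B r).carrier).Q.map
        ⟨(emor B r v).2.2, Gen.extra ⟨v, h0, rfl⟩⟩) ≫
      link B r hB (emor B r v).1 ≫ Pi hB (ν B (emor B r v).1)
  termination_by dv B r v
  decreasing_by
  · exact ((emor_spec B r v h0).resolve_right
      (fun hh => absurd hh.2 (by rw [h1]; exact lt_irrefl _))).2
  · exact ((emor_spec B r v h0).resolve_left (fun hh => h1 hh.1)).2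

lemma Pi_congr (hB : IsForest B.carrier) {v v' : Vtx B} (h : v = v') :
    Pi B r hB v = eqToHom (congrArg (Gv B r) h) ≫ Pi B r hB v' := by
  subst h; simp

/-- The cocone legs. -/
noncomputable def pic (hB : IsForest B.carrier) (x : C) :
    ((⊤ : MorphismProperty (TT B r).carrier).Q.obj ⟨x, trivial⟩ ⟶
      (⊤ : MorphismProperty (TT B r).carrier).Q.obj ⟨r, trivial⟩) :=
  link B r hB x ≫ Pi B r hB (ν B x)

noncomputable def toT (x : C) : (TT B r).carrier := ⟨x, trivial⟩

noncomputable def mkT {x y : C} (f : x ⟶ y) (hf : Gen B (Ehoms B r) x y f) :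
    toT B r x ⟶ toT B r y := ⟨f, hf⟩

lemma Pi_pos (hB : IsForest B.carrier) (v : Vtx B) (h0 : ¬ dv B r v = 0)
    (h1 : ν B (emor B r v).1 = v) :
    Pi B r hB v =
      eqToHom (congrArg (Gv B r) h1.symm) ≫ inv (link B r hB (emor B r v).1) ≫
        (⊤ : MorphismProperty (TT B r).carrier).Q.map
          (mkT B r (emor B r v).2.2 (Gen.extra ⟨v, h0, rfl⟩)) ≫
        link B r hB (emor B r v).2.1 ≫ Pi B r hB (ν B (emor B r v).2.1) := by
  rw [Pi, dif_neg h0, dif_pos h1]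
  rfl

lemma Pi_neg (hB : IsForest B.carrier) (v : Vtx B) (h0 : ¬ dv B r v = 0)
    (h1 : ¬ ν B (emor B r v).1 = v) :
    Pi B r hB v =
      eqToHom (congrArg (Gv B r)
        (((emor_spec B r v h0).resolve_left (fun hh => h1 hh.1)).1.symm)) ≫
        inv (link B r hB (emor B r v).2.1) ≫
        inv ((⊤ : MorphismProperty (TT B r).carrier).Q.map
          (mkT B r (emor B r v).2.2 (Gen.extra ⟨v, h0, rfl⟩))) ≫
        link B r hB (emor B r v).1 ≫ Pi B r hB (ν B (emor B r v).1) := by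
  rw [Pi, dif_neg h0, dif_neg h1]
  rfl

lemma key_a (hB : IsForest B.carrier) {a b : B.carrier} (f : a ⟶ b) :
    (⊤ : MorphismProperty (TT B r).carrier).Q.map ((inclBT B r).map f) ≫ pic B r hB b.1 =
      pic B r hB a.1 := by
  have hj : (Quotient.mk'' a : ConnectedComponents B.carrier) = Quotient.mk'' b :=
    Quotient.sound (Zigzag.of_hom f)
  have h1 : (⊤ : MorphismProperty (TT B r).carrier).Q.map ((inclBT B r).map f) =
      uu B r hB (Quotient.mk'' b) ⟨a, hj⟩ ⟨b, rfl⟩ :=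
    uu_map B r hB (Quotient.mk'' b) (a := ⟨a, hj⟩) (b := ⟨b, rfl⟩) (ObjectProperty.homMk f)
  have ha : ν B a.1 = Sum.inl (Quotient.mk'' b : ConnectedComponents B.carrier) :=
    (ν_mem B a.2).trans (congrArg Sum.inl hj)
  have hb : ν B b.1 = Sum.inl (Quotient.mk'' b : ConnectedComponents B.carrier) :=
    ν_mem B b.2
  rw [pic, pic, link_u B r hB a (Quotient.mk'' b) hj, link_u B r hB b (Quotient.mk'' b) rfl,
    h1, Pi_congr B r hB ha, Pi_congr B r hB hb]
  erw [Category.assoc (uu B r hB (Quotient.mk'' b) ⟨b, rfl⟩ (cc B (Quotient.mk'' b))),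
    ← Category.assoc (uu B r hB (Quotient.mk'' b) ⟨a, hj⟩ ⟨b, rfl⟩),
    uu_trans B r hB (Quotient.mk'' b) ⟨a, hj⟩ ⟨b, rfl⟩ (cc B (Quotient.mk'' b)), Category.assoc,
    eqToHom_trans_assoc, eqToHom_trans_assoc]
  rfl

lemma key_b (hB : IsForest B.carrier) (v : Vtx B) (h0 : ¬ dv B r v = 0)
    (pf : Gen B (Ehoms B r) (emor B r v).1 (emor B r v).2.1 (emor B r v).2.2) :
    (⊤ : MorphismProperty (TT B r).carrier).Q.map
        (mkT B r (emor B r v).2.2 pf) ≫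
      pic B r hB (emor B r v).2.1 = pic B r hB (emor B r v).1 := by
  have hpf : mkT B r (emor B r v).2.2 pf =
      mkT B r (emor B r v).2.2 (Gen.extra ⟨v, h0, rfl⟩) := rfl
  rw [hpf]
  by_cases h1 : ν B (emor B r v).1 = v
  · rw [pic, pic, Pi_congr B r hB h1, Pi_pos B r hB v h0 h1]
    simp
    rfl
  · have h2 := (emor_spec B r v h0).resolve_left (fun hh => h1 hh.1)
    rw [pic, pic, Pi_congr B r hB h2.1, Pi_neg B r hB v h0 h1]
    simp
    exact IsIso.hom_inv_id_assoc _ _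

lemma nat_all (hB : IsForest B.carrier) {x y : C} (f : x ⟶ y) (hf : Gen B (Ehoms B r) x y f) :
    (⊤ : MorphismProperty (TT B r).carrier).Q.map (mkT B r f hf) ≫ pic B r hB y =
      pic B r hB x := by
  induction hf with
  | @base x' y' f' h =>
      exact key_a B r hB (a := ⟨x', B.src_mem h⟩) (b := ⟨y', B.tgt_mem h⟩) ⟨f', h⟩
  | @extra x' y' f' h =>
      obtain ⟨v, h0, heq⟩ := h
      have hb := key_b B r hB v h0
      rw [heq] at hb
      exact hb _
  | id x' =>
      show (⊤ : MorphismProperty (TT B r).carrier).Q.map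
        (𝟙 (toT B r x')) ≫ pic B r hB x' = pic B r hB x'
      erw [CategoryTheory.Functor.map_id, Category.id_comp]
  | @comp x' y' z' f' g' hf' hg' ihf ihg =>
      show (⊤ : MorphismProperty (TT B r).carrier).Q.map
        (mkT B r f' hf' ≫ mkT B r g' hg') ≫ pic B r hB z' = pic B r hB x'
      erw [Functor.map_comp, Category.assoc, ihg, ihf]

end Stmt11
end Main2


/-- Let `C` be a connected small category and `B` a subcategory of `C` which is
a forest.  Then `B` can be extended to a maximal tree of `C`: there is a wide subcategory `T`
of `C` containing `B` which is a tree. -/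
theorem stmt_11 {C : Type u} [Category.{v} C] [IsConnected C]
    (B : Subcat C) (hB : IsForest B.carrier) :
    ∃ T : Subcat C, T.objs = Set.univ ∧ B.objs ⊆ T.objs ∧
      (∀ x y : C, B.homs x y ⊆ T.homs x y) ∧ IsTree T.carrier := by
  obtain ⟨r⟩ : Nonempty C := IsConnected.is_nonempty
  refine ⟨Stmt11.TT B r, rfl, ?_, fun x y f hf => Gen.base hf, ?_⟩
  · rw [show (Stmt11.TT B r).objs = Set.univ from rfl]
    exact Set.subset_univ _
  · exact isIndiscrete_of_cocone (r := (⟨r, trivial⟩ : (Stmt11.TT B r).carrier))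
      (fun x => Stmt11.pic B r hB x.1)
      (fun {a b} g => Stmt11.nat_all B r hB g.1 g.2)
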